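/- Let x, y be distinct words of length n over {0,…,q−1}, congruent modulo m (M(x) ≡ M(y) mod m with m ≥ w_{n+1}), and suppose there exist D, E ⊆ {1,…,n} with |D| = |E| ≤ d and x^{(D)} = y^{(E)}. Then 0 < |M(x) − M(y)| < m. -/

import Mathlib

/-- Weight sequence: `W p d i` = w_i(q,d) where p = q-1; w_i = 0 for i ≤ 0 (encoded by
ℕ truncated subtraction together with `W p d 0 = 0`), and w_i = 1 + p·∑_{j=1}^d w_{i-j}
for i ≥ 1. -/
def W (p d : ℕ) : ℕ → ℕ
  | 0 => 0
  | (i+1) => 1 + p * ∑ j ∈ Finset.range d, W p d (i - j)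
decreasing_by exact Nat.lt_succ_of_le (Nat.sub_le i j)

/-- Moment of a word (1-indexed): M(x) = ∑_{i=1}^{n} w_i x_i. -/
def moment (w : ℕ → ℕ) (x : List ℕ) : ℕ :=
  ∑ i ∈ Finset.range x.length, w (i + 1) * x.getD i 0

/-- Deleted word x^{(D)}: delete the symbols at the (1-indexed) positions in D,
keeping the remaining symbols in order. -/
def deleteD (x : List ℕ) (D : Finset ℕ) : List ℕ :=
  ((List.range x.length).filter (fun i => (i + 1) ∉ D)).map (fun i => x.getD i 0)

namespace VTaux

variable (p d : ℕ)

lemma W_zero : W p d 0 = 0 := by rw [W]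

lemma W_succ (i : ℕ) : W p d (i+1) = 1 + p * ∑ j ∈ Finset.range d, W p d (i - j) := by
  rw [W]

lemma W_le_succ : ∀ i, W p d i ≤ W p d (i+1) := by
  intro i
  induction i using Nat.strong_induction_on with
  | _ i ih =>
    match i with
    | 0 => rw [W_zero]; exact Nat.zero_le _
    | (i+1) =>
      rw [W_succ, W_succ]
      refine Nat.add_le_add_left (Nat.mul_le_mul_left _ (Finset.sum_le_sum ?_)) _
      intro j _
      rcases le_or_gt j i with h | h
      · have h2 : i + 1 - j = (i - j) + 1 := by omega
        rw [h2]; exact ih (i - j) (by omega)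
      · have h1 : i - j = 0 := by omega
        rw [h1, W_zero]; exact Nat.zero_le _

lemma W_mono : Monotone (W p d) := monotone_nat_of_le_succ (W_le_succ p d)

lemma one_le_W (i : ℕ) : 1 ≤ W p d (i+1) := by rw [W_succ]; exact Nat.le_add_right _ _

/-- KEY inequality: `p * ∑_{i<n} w(i+1) < w(n+1) + p * ∑_{i<a} w(i+1)` when `n ≤ a + d`. -/
lemma key (a n : ℕ) (h : n ≤ a + d) :
    p * ∑ i ∈ Finset.range n, W p d (i+1) <
      W p d (n+1) + p * ∑ i ∈ Finset.range a, W p d (i+1) := by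
  have hmain : ∑ i ∈ Finset.range n, W p d (i+1) ≤
      (∑ i ∈ Finset.range a, W p d (i+1)) + ∑ j ∈ Finset.range d, W p d (n - j) := by
    rcases le_or_gt n a with hna | hna
    · exact le_add_of_le_of_nonneg
        (Finset.sum_le_sum_of_subset (Finset.range_subset_range.2 hna)) (Nat.zero_le _)
    · have hsplit : ∑ i ∈ Finset.range n, W p d (i+1) =
          (∑ i ∈ Finset.range a, W p d (i+1)) + ∑ i ∈ Finset.Ico a n, W p d (i+1) := by
        rw [Finset.range_eq_Ico, ← Finset.sum_Ico_consecutive _ (Nat.zero_le a) (le_of_lt hna),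
          ← Finset.range_eq_Ico]
      rw [hsplit]
      refine Nat.add_le_add_left ?_ _
      have h1 : ∑ i ∈ Finset.Ico a n, W p d (i+1) =
          ∑ j ∈ Finset.range (n - a), W p d (a + j + 1) := by
        rw [Finset.sum_Ico_eq_sum_range]
      have h2 : ∑ j ∈ Finset.range (n - a), W p d (a + j + 1) =
          ∑ j ∈ Finset.range (n - a), W p d (n - j) := by
        rw [← Finset.sum_range_reflect]
        refine Finset.sum_congr rfl ?_
        intro j hj
        simp only [Finset.mem_range] at hj
        congr 1
        omega
      rw [h1, h2]
      refine Finset.sum_le_sum_of_subset (Finset.range_subset_range.2 (by omega))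
  calc p * ∑ i ∈ Finset.range n, W p d (i+1)
      ≤ p * ((∑ i ∈ Finset.range a, W p d (i+1)) + ∑ j ∈ Finset.range d, W p d (n - j)) :=
        Nat.mul_le_mul_left _ hmain
    _ = p * (∑ j ∈ Finset.range d, W p d (n - j)) + p * ∑ i ∈ Finset.range a, W p d (i+1) := by
        ring
    _ < W p d (n+1) + p * ∑ i ∈ Finset.range a, W p d (i+1) := by
        rw [W_succ]; omega


/-- S2: reindex list map-sum through getD. -/
lemma map_sum_eq (l : List ℕ) (g : ℕ → ℕ) :
    (l.map g).sum = ∑ k ∈ Finset.range l.length, g (l.getD k 0) := by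
  induction l with
  | nil => simp
  | cons a t ih =>
    rw [List.map_cons, List.sum_cons, List.length_cons, Finset.sum_range_succ', ih]
    simp only [List.getD_cons_succ, List.getD_cons_zero]
    ring

lemma sorted_le_getD_aux (l : List ℕ) (hs : l.Pairwise (· < ·)) :
    ∀ c, (∀ x ∈ l, c ≤ x) → ∀ k, k < l.length → c + k ≤ l.getD k 0 := by
  induction l with
  | nil => intro c _ k hk; simp at hk
  | cons a t ih =>
    intro c hc k hk
    match k with
    | 0 =>
      show c + 0 ≤ a
      have := hc a (by simp)
      omega
    | (k+1) =>
      show c + (k+1) ≤ (a :: t).getD (k+1) 0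
      rw [List.getD_cons_succ]
      have h1 : ∀ x ∈ t, c + 1 ≤ x := by
        intro x hx
        have hax : a < x := (List.pairwise_cons.1 hs).1 _ hx
        have := hc a (by simp)
        omega
      have := ih hs.of_cons (c+1) h1 k (by simpa using hk)
      omega

/-- S3: k-th element of a sorted (<) list of naturals is at least k. -/
lemma sorted_le_getD (l : List ℕ) (hs : l.Pairwise (· < ·)) (k : ℕ) (hk : k < l.length) :
    k ≤ l.getD k 0 := by
  have := sorted_le_getD_aux l hs 0 (fun _ _ => Nat.zero_le _) k hk
  omega

/-- elements of sorted list bound getD membership -/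
lemma getD_mem (l : List ℕ) (k : ℕ) (hk : k < l.length) : l.getD k 0 ∈ l := by
  rw [List.getD_eq_getElem _ _ hk]; exact List.getElem_mem _

/-- S1: splitting a range sum along a nodup list of indices. -/
lemma sum_split (n : ℕ) (f : ℕ → ℕ) (l : List ℕ) (hnd : l.Nodup) (hlt : ∀ i ∈ l, i < n) :
    ∑ i ∈ Finset.range n, f i =
      (l.map f).sum + ∑ i ∈ (Finset.range n).filter (· ∉ l), f i := by
  have h1 : (Finset.range n).filter (· ∈ l) = l.toFinset := by
    ext i
    simp only [Finset.mem_filter, Finset.mem_range, List.mem_toFinset]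
    exact ⟨fun h => h.2, fun h => ⟨hlt i h, h⟩⟩
  rw [← Finset.sum_filter_add_sum_filter_not (Finset.range n) (· ∈ l) f, h1,
    List.sum_toFinset f hnd]


lemma sorted_nodup (l : List ℕ) (hs : l.Pairwise (· < ·)) : l.Nodup := hs.nodup

/-- LB: moment of full word ≥ moment of (any) kept subword placed at lowest positions. -/
lemma momentLB (p d n : ℕ) (X : ℕ → ℕ) (l : List ℕ) (hs : l.Pairwise (· < ·))
    (hlt : ∀ i ∈ l, i < n) :
    ∑ k ∈ Finset.range l.length, W p d (k+1) * X (l.getD k 0) ≤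
      ∑ i ∈ Finset.range n, W p d (i+1) * X i := by
  rw [sum_split n _ l hs.nodup hlt]
  refine le_trans ?_ (Nat.le_add_right _ _)
  rw [map_sum_eq]
  refine Finset.sum_le_sum ?_
  intro k hk
  simp only [Finset.mem_range] at hk
  exact Nat.mul_le_mul_right _
    ((W_mono p d) (Nat.succ_le_succ (sorted_le_getD l hs k hk)))

/-- UB: moment of full word exceeds kept-subword moment by at most p times the
top weights. -/
lemma momentUB (p d n : ℕ) (X : ℕ → ℕ) (l : List ℕ) (hs : l.Pairwise (· < ·))
    (hlt : ∀ i ∈ l, i < n) (hX : ∀ i, i < n → X i ≤ p) :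
    (∑ i ∈ Finset.range n, W p d (i+1) * X i) + p * ∑ k ∈ Finset.range l.length, W p d (k+1)
      ≤ (∑ k ∈ Finset.range l.length, W p d (k+1) * X (l.getD k 0))
          + p * ∑ i ∈ Finset.range n, W p d (i+1) := by
  have hsplitf := sum_split n (fun i => W p d (i+1) * X i) l hs.nodup hlt
  have hsplitw := sum_split n (fun i => W p d (i+1)) l hs.nodup hlt
  set Del := ∑ i ∈ (Finset.range n).filter (· ∉ l), W p d (i+1) * X i with hDel
  set Delw := ∑ i ∈ (Finset.range n).filter (· ∉ l), W p d (i+1) with hDelw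
  have hdel_le : Del ≤ p * Delw := by
    rw [hDel, hDelw, Finset.mul_sum]
    refine Finset.sum_le_sum ?_
    intro i hi
    simp only [Finset.mem_filter, Finset.mem_range] at hi
    calc W p d (i+1) * X i ≤ W p d (i+1) * p := Nat.mul_le_mul_left _ (hX i hi.1)
      _ = p * W p d (i+1) := Nat.mul_comm _ _
  have hkept : (l.map (fun i => W p d (i+1) * X i)).sum
        + p * ∑ k ∈ Finset.range l.length, W p d (k+1)
      ≤ (∑ k ∈ Finset.range l.length, W p d (k+1) * X (l.getD k 0))
        + p * (l.map (fun i => W p d (i+1))).sum := by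
    rw [map_sum_eq, map_sum_eq, Finset.mul_sum, Finset.mul_sum,
      ← Finset.sum_add_distrib, ← Finset.sum_add_distrib]
    refine Finset.sum_le_sum ?_
    intro k hk
    simp only [Finset.mem_range] at hk
    have h1 : W p d (k+1) ≤ W p d (l.getD k 0 + 1) :=
      (W_mono p d) (Nat.succ_le_succ (sorted_le_getD l hs k hk))
    have h2 : X (l.getD k 0) ≤ p := hX _ (hlt _ (getD_mem l k hk))
    have := mul_add_mul_le_mul_add_mul h1 h2
    -- this : W(k+1) * p + W(σ+1) * X σ ≤ W(k+1) * X σ + W(σ+1) * p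
    calc W p d (l.getD k 0 + 1) * X (l.getD k 0) + p * W p d (k+1)
        = W p d (k+1) * p + W p d (l.getD k 0 + 1) * X (l.getD k 0) := by ring
      _ ≤ W p d (k+1) * X (l.getD k 0) + W p d (l.getD k 0 + 1) * p := this
      _ = W p d (k+1) * X (l.getD k 0) + p * W p d (l.getD k 0 + 1) := by ring
  calc (∑ i ∈ Finset.range n, W p d (i+1) * X i)
        + p * ∑ k ∈ Finset.range l.length, W p d (k+1)
      = ((l.map (fun i => W p d (i+1) * X i)).sum
          + p * ∑ k ∈ Finset.range l.length, W p d (k+1)) + Del := by rw [hsplitf]; ring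
    _ ≤ ((∑ k ∈ Finset.range l.length, W p d (k+1) * X (l.getD k 0))
          + p * (l.map (fun i => W p d (i+1))).sum) + p * Delw :=
        Nat.add_le_add hkept hdel_le
    _ = (∑ k ∈ Finset.range l.length, W p d (k+1) * X (l.getD k 0))
          + p * ((l.map (fun i => W p d (i+1))).sum + Delw) := by ring
    _ = (∑ k ∈ Finset.range l.length, W p d (k+1) * X (l.getD k 0))
          + p * ∑ i ∈ Finset.range n, W p d (i+1) := by rw [← hsplitw]


lemma map_getD (f : ℕ → ℕ) (l : List ℕ) (k : ℕ) (hk : k < l.length) :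
    (l.map f).getD k 0 = f (l.getD k 0) := by
  rw [List.getD_eq_getElem _ _ (by simpa using hk), List.getD_eq_getElem _ _ hk,
    List.getElem_map]

lemma map_eq_getD (X Y : ℕ → ℕ) (lx ly : List ℕ) (h : lx.map X = ly.map Y)
    (k : ℕ) (hk : k < lx.length) : X (lx.getD k 0) = Y (ly.getD k 0) := by
  have hk' : k < ly.length := by
    have hlen := congrArg List.length h
    simp only [List.length_map] at hlen
    omega
  rw [← map_getD X lx k hk, ← map_getD Y ly k hk', h]

lemma getD_concat_lt (l : List ℕ) (a k : ℕ) (hk : k < l.length) :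
    (l ++ [a]).getD k 0 = l.getD k 0 := by
  rw [List.getD_eq_getElem _ _ (by simp; omega), List.getD_eq_getElem _ _ hk,
    List.getElem_append_left hk]

lemma getD_concat_len (l : List ℕ) (a : ℕ) :
    (l ++ [a]).getD l.length 0 = a := by
  rw [List.getD_eq_getElem _ _ (by simp)]
  simp

lemma concat_of_max (l : List ℕ) (n : ℕ) (hs : l.Pairwise (· < ·))
    (hlt : ∀ i ∈ l, i < n + 1) (hn : n ∈ l) :
    ∃ l', l = l' ++ [n] ∧ l'.Pairwise (· < ·) ∧ ∀ i ∈ l', i < n := by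
  rcases List.eq_nil_or_concat l with rfl | ⟨l', b, rfl⟩
  · simp at hn
  rw [List.concat_eq_append] at *
  have hsplit := List.pairwise_append.1 hs
  have hb : b = n := by
    rcases List.mem_append.1 hn with h | h
    · have h1 : n < b := hsplit.2.2 n h b (by simp)
      have h2 : b < n + 1 := hlt b (by simp)
      omega
    · simp only [List.mem_singleton] at h
      omega
  subst hb
  exact ⟨l', rfl, hsplit.1, fun i hi => hsplit.2.2 i hi b (by simp)⟩

lemma arith_iv (my mx a wlxn pwl ps1 pswn wn1 wn1yn wn1xn : ℕ)
    (hUB : my + (ps1 + pwl) ≤ a + wlxn + pswn)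
    (hLB : a ≤ mx)
    (hkey : pswn < wn1 + ps1)
    (hWX : wlxn ≤ pwl)
    (hmul : wn1yn + wn1 ≤ wn1xn) :
    my + wn1yn < mx + wn1xn := by linarith

lemma arith_iii (my mx a wlx ps1 pswn wn1 wn1yn wn1xn : ℕ)
    (hUB : my + ps1 ≤ a + pswn)
    (hLB : a + wlx ≤ mx)
    (hkey : pswn < wn1 + ps1)
    (hmul : wn1yn + wn1 ≤ wn1xn) :
    my + wn1yn < mx + wn1xn := by linarith

lemma arith_ii (my mx zx ps1 pswn wn1 wn1yn wn1xn : ℕ)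
    (hUB : my + ps1 ≤ zx + pswn)
    (hLB : zx ≤ mx)
    (hkey : pswn < wn1 + ps1)
    (hmul : wn1yn + wn1 ≤ wn1xn) :
    my + wn1yn < mx + wn1xn := by linarith

lemma step (p d : ℕ) (hd : 1 ≤ d) (n : ℕ) (X Y : ℕ → ℕ) (lx ly : List ℕ)
    (hsx : lx.Pairwise (· < ·)) (hsy : ly.Pairwise (· < ·))
    (hltx : ∀ i ∈ lx, i < n + 1) (hlty : ∀ i ∈ ly, i < n + 1)
    (hlen : lx.length = ly.length) (hcnt : n + 1 ≤ lx.length + d)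
    (hXb : ∀ i, i < n + 1 → X i ≤ p) (hYb : ∀ i, i < n + 1 → Y i ≤ p)
    (hmap : lx.map X = ly.map Y) (hlast : Y n < X n) :
    ∑ i ∈ Finset.range (n+1), W p d (i+1) * Y i <
      ∑ i ∈ Finset.range (n+1), W p d (i+1) * X i := by
  rw [Finset.sum_range_succ, Finset.sum_range_succ]
  set MX := ∑ i ∈ Finset.range n, W p d (i+1) * X i with hMX
  set MY := ∑ i ∈ Finset.range n, W p d (i+1) * Y i with hMY
  have hz : ∀ k, k < lx.length → X (lx.getD k 0) = Y (ly.getD k 0) :=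
    fun k hk => map_eq_getD X Y lx ly hmap k hk
  have hmul : W p d (n+1) * Y n + W p d (n+1) ≤ W p d (n+1) * X n := by
    have : W p d (n+1) * (Y n + 1) ≤ W p d (n+1) * X n :=
      Nat.mul_le_mul_left _ (by omega)
    calc W p d (n+1) * Y n + W p d (n+1) = W p d (n+1) * (Y n + 1) := by ring
      _ ≤ W p d (n+1) * X n := this
  by_cases hx : n ∈ lx <;> by_cases hy : n ∈ ly
  · -- both keep n : contradiction
    exfalso
    obtain ⟨lx', rfl, hsx', hltx'⟩ := concat_of_max lx n hsx hltx hx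
    obtain ⟨ly', rfl, hsy', hlty'⟩ := concat_of_max ly n hsy hlty hy
    have hlen' : lx'.length = ly'.length := by simpa using hlen
    have h1 : X ((lx' ++ [n]).getD lx'.length 0) = Y ((ly' ++ [n]).getD lx'.length 0) :=
      hz lx'.length (by simp)
    rw [getD_concat_len, hlen', getD_concat_len] at h1
    omega
  · -- case iv : n ∈ lx, n ∉ ly
    obtain ⟨lx', rfl, hsx', hltx'⟩ := concat_of_max lx n hsx hltx hx
    have hlty' : ∀ i ∈ ly, i < n := by
      intro i hi
      have := hlty i hi
      rcases Nat.lt_or_ge i n with h | h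
      · exact h
      · exfalso; have : i = n := by omega
        exact hy (this ▸ hi)
    have hlen' : ly.length = lx'.length + 1 := by simpa using hlen.symm
    set L' := lx'.length with hL'
    set A := ∑ k ∈ Finset.range L', W p d (k+1) * X (lx'.getD k 0) with hA
    -- LB for X
    have hLB : A ≤ MX := momentLB p d n X lx' hsx' hltx'
    -- UB for Y with full list ly
    have hUB := momentUB p d n Y ly hsy hlty' (fun i hi => hYb i (by omega))
    -- Z_y = A + W(L'+1) * X n
    have hZy : ∑ k ∈ Finset.range ly.length, W p d (k+1) * Y (ly.getD k 0)
        = A + W p d (L'+1) * X n := by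
      rw [hlen', Finset.sum_range_succ]
      congr 1
      · refine Finset.sum_congr rfl ?_
        intro k hk
        simp only [Finset.mem_range] at hk
        have h1 := hz k (by simp [hL'] at hk ⊢; omega)
        rw [getD_concat_lt _ _ _ hk] at h1
        rw [← h1]
      · congr 1
        have h1 := hz L' (by simp [hL'])
        rw [getD_concat_len] at h1
        rw [← h1]
    rw [hZy] at hUB
    -- arithmetic
    have hkey := key p d L' n (by omega)
    have hWX : W p d (L'+1) * X n ≤ p * W p d (L'+1) := by
      calc W p d (L'+1) * X n ≤ W p d (L'+1) * p :=
            Nat.mul_le_mul_left _ (hXb n (by omega))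
        _ = p * W p d (L'+1) := Nat.mul_comm _ _
    have hSw : ∑ k ∈ Finset.range ly.length, W p d (k+1)
        = (∑ k ∈ Finset.range L', W p d (k+1)) + W p d (L'+1) := by
      rw [hlen', Finset.sum_range_succ]
    rw [hSw] at hUB
    -- MY + p*(SwL' + w(L'+1)) ≤ A + w(L'+1)*Xn + p*Swn
    -- p*Swn < w(n+1) + p*SwL'
    -- w(L'+1)*Xn ≤ p*w(L'+1) ; A ≤ MX ; hmul
    have e1 : p * ((∑ k ∈ Finset.range L', W p d (k+1)) + W p d (L'+1))
        = p * (∑ k ∈ Finset.range L', W p d (k+1)) + p * W p d (L'+1) := by ring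
    rw [e1] at hUB
    exact arith_iv _ _ _ _ _ _ _ _ _ _ hUB hLB hkey hWX hmul
  · -- case iii : n ∉ lx, n ∈ ly
    obtain ⟨ly', rfl, hsy', hlty'⟩ := concat_of_max ly n hsy hlty hy
    have hltx' : ∀ i ∈ lx, i < n := by
      intro i hi
      have := hltx i hi
      rcases Nat.lt_or_ge i n with h | h
      · exact h
      · exfalso; have : i = n := by omega
        exact hx (by rwa [show i = n by omega] at hi)
    have hlen' : lx.length = ly'.length + 1 := by simpa using hlen
    set L' := ly'.length with hL'
    set A := ∑ k ∈ Finset.range L', W p d (k+1) * Y (ly'.getD k 0) with hA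
    -- UB for Y with ly'
    have hUB := momentUB p d n Y ly' hsy' hlty' (fun i hi => hYb i (by omega))
    -- LB for X with full lx
    have hLB := momentLB p d n X lx hsx hltx'
    have hZx : ∑ k ∈ Finset.range lx.length, W p d (k+1) * X (lx.getD k 0)
        = A + W p d (L'+1) * X (lx.getD L' 0) := by
      rw [hlen', Finset.sum_range_succ]
      congr 1
      refine Finset.sum_congr rfl ?_
      intro k hk
      simp only [Finset.mem_range] at hk
      have h1 := hz k (by omega)
      rw [h1, getD_concat_lt _ _ _ hk]
    rw [hZx] at hLB
    have hkey := key p d L' n (by omega)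
    exact arith_iii _ _ _ _ _ _ _ _ _ hUB hLB hkey hmul
  · -- case ii : n ∉ lx, n ∉ ly
    have hltx' : ∀ i ∈ lx, i < n := by
      intro i hi
      have := hltx i hi
      have : i ≠ n := fun h => hx (h ▸ hi)
      omega
    have hlty' : ∀ i ∈ ly, i < n := by
      intro i hi
      have := hlty i hi
      have : i ≠ n := fun h => hy (h ▸ hi)
      omega
    set Zx := ∑ k ∈ Finset.range lx.length, W p d (k+1) * X (lx.getD k 0) with hZx
    have hZxy : Zx = ∑ k ∈ Finset.range ly.length, W p d (k+1) * Y (ly.getD k 0) := by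
      rw [hZx, hlen]
      refine Finset.sum_congr rfl ?_
      intro k hk
      simp only [Finset.mem_range] at hk
      rw [hz k (by omega)]
    have hLB := momentLB p d n X lx hsx hltx'
    have hUB := momentUB p d n Y ly hsy hlty' (fun i hi => hYb i (by omega))
    rw [← hZxy] at hUB
    rw [← hZx] at hLB
    have hSweq : ∑ k ∈ Finset.range ly.length, W p d (k+1)
        = ∑ k ∈ Finset.range lx.length, W p d (k+1) := by rw [hlen]
    rw [hSweq] at hUB
    have hkey := key p d lx.length n (by omega)
    exact arith_ii _ _ _ _ _ _ _ _ hUB hLB hkey hmul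

theorem core (p d : ℕ) (hd : 1 ≤ d) : ∀ (n : ℕ) (X Y : ℕ → ℕ) (lx ly : List ℕ),
    lx.Pairwise (· < ·) → ly.Pairwise (· < ·) → (∀ i ∈ lx, i < n) → (∀ i ∈ ly, i < n) →
    lx.length = ly.length → n ≤ lx.length + d →
    (∀ i, i < n → X i ≤ p) → (∀ i, i < n → Y i ≤ p) →
    lx.map X = ly.map Y → (∃ i, i < n ∧ X i ≠ Y i) →
    ∑ i ∈ Finset.range n, W p d (i+1) * X i ≠ ∑ i ∈ Finset.range n, W p d (i+1) * Y i := by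
  intro n
  induction n with
  | zero => rintro X Y lx ly _ _ _ _ _ _ _ _ _ ⟨i, hi, _⟩; omega
  | succ n IH =>
    intro X Y lx ly hsx hsy hltx hlty hlen hcnt hXb hYb hmap hex
    by_cases hXY : X n = Y n
    · -- last symbols agree; reduce to length n via IH
      obtain ⟨i, hi, hne⟩ := hex
      have hi' : i < n := by
        rcases Nat.lt_or_ge i n with h | h
        · exact h
        · exfalso; have : i = n := by omega
          exact hne (this ▸ hXY)
      rw [Finset.sum_range_succ, Finset.sum_range_succ, hXY]
      intro h
      have h' : ∑ i ∈ Finset.range n, W p d (i+1) * X i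
          = ∑ i ∈ Finset.range n, W p d (i+1) * Y i := by omega
      have hXb' : ∀ i, i < n → X i ≤ p := fun i hi => hXb i (by omega)
      have hYb' : ∀ i, i < n → Y i ≤ p := fun i hi => hYb i (by omega)
      by_cases hx : n ∈ lx <;> by_cases hy : n ∈ ly
      · obtain ⟨lx', rfl, hsx', hltx'⟩ := concat_of_max lx n hsx hltx hx
        obtain ⟨ly', rfl, hsy', hlty'⟩ := concat_of_max ly n hsy hlty hy
        have hlen' : lx'.length = ly'.length := by simpa using hlen
        have hmap' : lx'.map X = ly'.map Y := by
          rw [List.map_append, List.map_append] at hmap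
          exact (List.append_inj' hmap (by simp)).1
        exact IH X Y lx' ly' hsx' hsy' hltx' hlty' hlen'
          (by simp at hcnt; omega) hXb' hYb' hmap' ⟨i, hi', hne⟩ h'
      · -- n ∈ lx, n ∉ ly
        obtain ⟨lx', rfl, hsx', hltx'⟩ := concat_of_max lx n hsx hltx hx
        rcases List.eq_nil_or_concat ly with rfl | ⟨ly', b, rfl⟩
        · simp at hlen
        rw [List.concat_eq_append] at *
        have hsy' : ly'.Pairwise (· < ·) := (List.pairwise_append.1 hsy).1
        have hlty' : ∀ i ∈ ly', i < n := by
          intro j hj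
          have h1 := hlty j (by simp [hj])
          have h2 : j ≠ n := fun h => hy (by simpa [h] using List.mem_append_left [b] hj)
          omega
        have hlen' : lx'.length = ly'.length := by simpa using hlen
        have hmap' : lx'.map X = ly'.map Y := by
          rw [List.map_append, List.map_append] at hmap
          exact (List.append_inj' hmap (by simp)).1
        exact IH X Y lx' ly' hsx' hsy' hltx' hlty' hlen'
          (by simp at hcnt; omega) hXb' hYb' hmap' ⟨i, hi', hne⟩ h'
      · -- n ∉ lx, n ∈ ly
        obtain ⟨ly', rfl, hsy', hlty'⟩ := concat_of_max ly n hsy hlty hy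
        rcases List.eq_nil_or_concat lx with rfl | ⟨lx', a, rfl⟩
        · simp at hlen
        rw [List.concat_eq_append] at *
        have hsx' : lx'.Pairwise (· < ·) := (List.pairwise_append.1 hsx).1
        have hltx' : ∀ i ∈ lx', i < n := by
          intro j hj
          have h1 := hltx j (by simp [hj])
          have h2 : j ≠ n := fun h => hx (by simpa [h] using List.mem_append_left [a] hj)
          omega
        have hlen' : lx'.length = ly'.length := by simpa using hlen
        have hmap' : lx'.map X = ly'.map Y := by
          rw [List.map_append, List.map_append] at hmap
          exact (List.append_inj' hmap (by simp)).1
        exact IH X Y lx' ly' hsx' hsy' hltx' hlty' hlen'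
          (by simp at hcnt; omega) hXb' hYb' hmap' ⟨i, hi', hne⟩ h'
      · -- n ∉ lx, n ∉ ly
        have hltx' : ∀ j ∈ lx, j < n := by
          intro j hj
          have h1 := hltx j hj
          have h2 : j ≠ n := fun h => hx (h ▸ hj)
          omega
        have hlty' : ∀ j ∈ ly, j < n := by
          intro j hj
          have h1 := hlty j hj
          have h2 : j ≠ n := fun h => hy (h ▸ hj)
          omega
        exact IH X Y lx ly hsx hsy hltx' hlty' hlen (by omega) hXb' hYb' hmap
          ⟨i, hi', hne⟩ h'
    · -- last symbols differ: strict inequality via `step`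
      rcases Nat.lt_or_ge (Y n) (X n) with h | h
      · exact (step p d hd n X Y lx ly hsx hsy hltx hlty hlen hcnt hXb hYb hmap h).ne'
      · have h' : X n < Y n := by omega
        exact (step p d hd n Y X ly lx hsy hsx hlty hltx hlen.symm (by omega)
          hYb hXb hmap.symm h').ne

lemma arith_main (mx my zx ps1 pswn wn1 : ℕ)
    (hUBx : mx + ps1 ≤ zx + pswn) (hLBy : zx ≤ my) (hkey : pswn < wn1 + ps1) :
    mx < my + wn1 := by linarith

end VTaux

open VTaux

theorem moment_diff_strict_bounds (q d n m : ℕ) (hq : 2 ≤ q) (hd : 1 ≤ d)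
    (hm : W (q - 1) d (n + 1) ≤ m)
    (x y : List ℕ) (hxlen : x.length = n) (hylen : y.length = n)
    (hx : ∀ a ∈ x, a < q) (hy : ∀ a ∈ y, a < q) (hne : x ≠ y)
    (hcong : moment (W (q - 1) d) x ≡ moment (W (q - 1) d) y [MOD m])
    (D E : Finset ℕ) (hD : D ⊆ Finset.Icc 1 n) (hE : E ⊆ Finset.Icc 1 n)
    (hcard : D.card = E.card) (hd' : D.card ≤ d)
    (hdel : deleteD x D = deleteD y E) :
    0 < |(moment (W (q - 1) d) x : ℤ) - (moment (W (q - 1) d) y : ℤ)| ∧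
      |(moment (W (q - 1) d) x : ℤ) - (moment (W (q - 1) d) y : ℤ)| < m := by
  subst hxlen
  set p := q - 1 with hp
  set n := x.length with hn
  set X : ℕ → ℕ := fun i => x.getD i 0 with hX
  set Y : ℕ → ℕ := fun i => y.getD i 0 with hY
  set lx : List ℕ := (List.range n).filter (fun i => (i + 1) ∉ D) with hlx
  set ly : List ℕ := (List.range y.length).filter (fun i => (i + 1) ∉ E) with hly
  have hmap : lx.map X = ly.map Y := hdel
  have hsx : lx.Pairwise (· < ·) := List.Pairwise.filter _ (List.pairwise_lt_range (n := n))
  have hsy : ly.Pairwise (· < ·) := List.Pairwise.filter _ (List.pairwise_lt_range (n := y.length))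
  have hltx : ∀ i ∈ lx, i < n := by
    intro i hi
    rw [hlx, List.mem_filter] at hi
    exact List.mem_range.1 hi.1
  have hlty : ∀ i ∈ ly, i < n := by
    intro i hi
    rw [hly, List.mem_filter] at hi
    have := List.mem_range.1 hi.1
    omega
  have hlen : lx.length = ly.length := by
    have := congrArg List.length hmap
    simpa using this
  have hcnt : n ≤ lx.length + d := by
    have hperm := List.filter_append_perm (fun i => decide ((i + 1) ∉ D)) (List.range n)
    have hlensum := hperm.length_eq
    rw [List.length_append, List.length_range] at hlensum
    set lneg : List ℕ := (List.range n).filter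
      (fun i => !decide ((i + 1) ∉ D)) with hlneg
    have hneg_le : lneg.length ≤ D.card := by
      have hnd : lneg.Nodup :=
        (List.Pairwise.filter _ (List.pairwise_lt_range (n := n)) : lneg.Pairwise (· < ·)).nodup
      have hndm : (lneg.map (· + 1)).Nodup := hnd.map (fun a b h => by omega)
      have hsub : (lneg.map (· + 1)).toFinset ⊆ D := by
        intro z hz
        rw [List.mem_toFinset, List.mem_map] at hz
        obtain ⟨i, hi, rfl⟩ := hz
        rw [hlneg, List.mem_filter] at hi
        have := hi.2
        simpa using this
      calc lneg.length = (lneg.map (· + 1)).length := by rw [List.length_map]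
        _ = (lneg.map (· + 1)).toFinset.card := (List.toFinset_card_of_nodup hndm).symm
        _ ≤ D.card := Finset.card_le_card hsub
    have hsum2 : lx.length + lneg.length = n := by rw [hlx, hlneg]; exact hlensum
    omega
  have hXb : ∀ i, i < n → X i ≤ p := by
    intro i hi
    have hmem : x.getD i 0 ∈ x := by
      rw [List.getD_eq_getElem _ _ hi]; exact List.getElem_mem _
    have := hx _ hmem
    simp only [hX]
    omega
  have hYb : ∀ i, i < n → Y i ≤ p := by
    intro i hi
    have hi' : i < y.length := by omega
    have hmem : y.getD i 0 ∈ y := by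
      rw [List.getD_eq_getElem _ _ hi']; exact List.getElem_mem _
    have := hy _ hmem
    simp only [hY]
    omega
  have hex : ∃ i, i < n ∧ X i ≠ Y i := by
    by_contra hc
    push_neg at hc
    apply hne
    apply List.ext_getElem (by omega)
    intro i h1 h2
    have h3 : x.getD i 0 = y.getD i 0 := hc i (by omega)
    rwa [List.getD_eq_getElem _ _ h1, List.getD_eq_getElem _ _ h2] at h3
  -- moments as range sums
  have hmx : moment (W p d) x = ∑ i ∈ Finset.range n, W p d (i+1) * X i := rfl
  have hmy : moment (W p d) y = ∑ i ∈ Finset.range n, W p d (i+1) * Y i := by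
    rw [show moment (W p d) y = ∑ i ∈ Finset.range y.length, W p d (i+1) * Y i from rfl,
      hylen]
  -- positivity
  have hne' : ∑ i ∈ Finset.range n, W p d (i+1) * X i ≠
      ∑ i ∈ Finset.range n, W p d (i+1) * Y i :=
    core p d hd n X Y lx ly hsx hsy hltx hlty hlen hcnt hXb hYb hmap hex
  -- upper bounds both ways
  have hltyn : ∀ i ∈ ly, i < n := hlty
  have hZeq : ∑ k ∈ Finset.range lx.length, W p d (k+1) * X (lx.getD k 0)
      = ∑ k ∈ Finset.range ly.length, W p d (k+1) * Y (ly.getD k 0) := by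
    rw [← hlen]
    refine Finset.sum_congr rfl ?_
    intro k hk
    simp only [Finset.mem_range] at hk
    rw [map_eq_getD X Y lx ly hmap k hk]
  have hLBx := momentLB p d n X lx hsx hltx
  have hLBy := momentLB p d n Y ly hsy hltyn
  have hUBx := momentUB p d n X lx hsx hltx hXb
  have hUBy := momentUB p d n Y ly hsy hltyn hYb
  rw [← hZeq] at hLBy hUBy
  have hswe : ∑ k ∈ Finset.range ly.length, W p d (k+1)
      = ∑ k ∈ Finset.range lx.length, W p d (k+1) := by rw [hlen]
  rw [hswe] at hUBy
  have hkey := key p d lx.length n hcnt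
  have hb1 : ∑ i ∈ Finset.range n, W p d (i+1) * X i
      < (∑ i ∈ Finset.range n, W p d (i+1) * Y i) + W p d (n+1) :=
    arith_main _ _ _ _ _ _ hUBx hLBy hkey
  have hb2 : ∑ i ∈ Finset.range n, W p d (i+1) * Y i
      < (∑ i ∈ Finset.range n, W p d (i+1) * X i) + W p d (n+1) :=
    arith_main _ _ _ _ _ _ hUBy hLBx hkey
  rw [hmx, hmy]
  constructor
  · rw [abs_pos, sub_ne_zero]
    exact_mod_cast hne'
  · rw [abs_sub_lt_iff]
    constructor <;> omega
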